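/- Monotone exhaustion of covolume: Let K ∈ C_b(D) and let {ω_i} be an increasing sequence of compact subsets of D with ⋃_i ω_i = D. Then K_{ω_{i+1}} ⊆ K_{ω_i}, K = ⋂_i K_{ω_i}, and V_n(K^c) = lim_{i→∞} V_n(K_{ω_i}^c). -/

import Mathlib

open MeasureTheory Set Filter Metric Bornology
open scoped RealInnerProductSpace ENNReal NNReal Topology Pointwise

noncomputable section

abbrev E (n : ℕ) := EuclideanSpace ℝ (Fin (n + 1))

/-- The last coordinate direction `e_{n+1}`. -/
def eLast (n : ℕ) : E n := EuclideanSpace.single (Fin.last n) 1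

/-- The closed upper half space `H^+_{n+1}`. -/
def upperHalf (n : ℕ) : Set (E n) := {x | 0 ≤ ⟪x, eLast n⟫}

/-- The open lower hemisphere `S^n_-`. -/
def Snminus (n : ℕ) : Set (E n) := {x | ‖x‖ = 1 ∧ ⟪x, eLast n⟫ < 0}

/-- `u` is an outer normal of `K` at `x`, i.e. `{y | ⟪y,u⟫ ≤ ⟪x,u⟫}` is a
supporting half space of `K` at `x`. -/
def IsSupport (n : ℕ) (K : Set (E n)) (x u : E n) : Prop :=
  u ≠ 0 ∧ ∀ y ∈ K, ⟪y, u⟫ ≤ ⟪x, u⟫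

/-- The `t`-asymptotic boundary set `A_t(K)`. -/
def At (n : ℕ) (K : Set (E n)) (t : ℝ) : Set (E n) :=
  {x | 0 ≤ ⟪x, eLast n⟫ ∧ ⟪x, eLast n⟫ ≤ t} ∩
    ⋂ x ∈ frontier K ∩ {y | ⟪y, eLast n⟫ = t}, ⋂ u ∈ {u | IsSupport n K x u},
      {y | ⟪y, u⟫ ≤ ⟪x, u⟫}

/-- The asymptotic boundary set `A(K)`. -/
def Abdry (n : ℕ) (K : Set (E n)) : Set (E n) := closure (⋃ t ∈ Ioi (0 : ℝ), At n K t)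

/-- The class `C_0`: non-compact closed convex subsets of the upper half space with
the origin on the boundary and nonempty interior. -/
structure IsC0 (n : ℕ) (K : Set (E n)) : Prop where
  conv : Convex ℝ K
  closed : IsClosed K
  noncompact : ¬ IsCompact K
  sub : K ⊆ upperHalf n
  origin : (0 : E n) ∈ frontier K
  int_ne : (interior K).Nonempty

/-- The class `C_c`: members of `C_0` with `A(K) ∩ {x_{n+1} = 0}` compact. -/
def IsCc (n : ℕ) (K : Set (E n)) : Prop :=
  IsC0 n K ∧ IsCompact (Abdry n K ∩ {x | ⟪x, eLast n⟫ = 0})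

/-- The coconvex set `K^c := A(K) \ K`. -/
def coco (n : ℕ) (K : Set (E n)) : Set (E n) := Abdry n K \ K

/-- The class `C_b`: members of `C_c` with `K^c` of finite volume. -/
def IsCb (n : ℕ) (K : Set (E n)) : Prop := IsCc n K ∧ volume (coco n K) < ⊤

/-- The support function of `K`. -/
def supportFn (n : ℕ) (K : Set (E n)) (u : E n) : ℝ :=
  sSup ((fun y => ⟪y, u⟫) '' K)

/-- Membership in `C_c(D)`: the support function of `K` is finite exactly on `closure D`. -/
def IsCcD (n : ℕ) (D K : Set (E n)) : Prop :=
  IsCc n K ∧ ∀ u : E n, ‖u‖ = 1 →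
    (BddAbove ((fun y => ⟪y, u⟫) '' K) ↔ u ∈ closure D)

/-- Membership in `C_b(D)`. -/
def IsCbD (n : ℕ) (D K : Set (E n)) : Prop := IsCcD n D K ∧ volume (coco n K) < ⊤

/-- `D` is a convex domain in `S^n_-` (the cone over `D` together with `0` is convex). -/
def IsConvexDomain (n : ℕ) (D : Set (E n)) : Prop :=
  D.Nonempty ∧ D ⊆ Snminus n ∧
    Convex ℝ (insert 0 {x : E n | ∃ r : ℝ, 0 < r ∧ ∃ u ∈ D, x = r • u})

/-- A choice of unit outer normal of `K` at `x` (the Gauss map; junk value `0`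
where no unit outer normal exists). -/
def normalAt (n : ℕ) (K : Set (E n)) (x : E n) : E n :=
  Classical.epsilon (fun u : E n => ‖u‖ = 1 ∧ IsSupport n K x u)

/-- The surface area measure of `K`: the push forward of the `n`-dimensional
Hausdorff measure on `∂K` under the Gauss map. -/
def surfMeasure (n : ℕ) (K : Set (E n)) : Measure (E n) :=
  Measure.map (normalAt n K) (μH[(n : ℝ)].restrict (frontier K))

/-- The co-sum `(1-l)·K₀ᶜ ⊕ l·K₁ᶜ := A((1-l)K₀ + lK₁) \ ((1-l)K₀ + lK₁)`. -/
def cosum (n : ℕ) (K0 K1 : Set (E n)) (l : ℝ) : Set (E n) :=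
  Abdry n ((1 - l) • K0 + l • K1) \ ((1 - l) • K0 + l • K1)

/-- The Wulff shape `K_ω` associated with `K` and a compact set `ω ⊆ D`. -/
def wulffOf (n : ℕ) (K ω : Set (E n)) : Set (E n) :=
  Abdry n K ∩ ⋂ u ∈ ω, {x | ⟪x, u⟫ ≤ supportFn n K u}

/-- The mixed covolume of `K^c` and `L^c` (integral representation). -/
def mixedCovol (n : ℕ) (D K L : Set (E n)) : ℝ :=
  (1 / (n + 1 : ℝ)) * ∫ u in D, (supportFn n K u - supportFn n L u) ∂(surfMeasure n K)

end


lemma bddAbove_inner_of_mem_coneD (n : ℕ) (D : Set (E n)) (K : Set (E n))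
    (hK : IsCbD n D K) (hDs : D ⊆ Snminus n)
    {z : E n}
    (hz : z ∈ insert (0 : E n) {x : E n | ∃ r : ℝ, 0 < r ∧ ∃ u ∈ D, x = r • u}) :
    BddAbove ((fun y => ⟪y, z⟫) '' K) := by
  rcases hz with rfl | ⟨r, hr, u, huD, rfl⟩
  · exact ⟨0, by rintro _ ⟨y, hy, rfl⟩; simp⟩
  · have h1 : ‖u‖ = 1 := (hDs huD).1
    obtain ⟨M, hM⟩ : BddAbove ((fun y => ⟪y, u⟫) '' K) :=
      (hK.1.2 u h1).2 (subset_closure huD)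
    refine ⟨r * M, ?_⟩
    rintro _ ⟨y, hy, rfl⟩
    simp only [real_inner_smul_right]
    exact mul_le_mul_of_nonneg_left (hM ⟨y, hy, rfl⟩) hr.le

lemma exists_violator (n : ℕ) (D : Set (E n)) (hD : IsConvexDomain n D)
    (K : Set (E n)) (hK : IsCbD n D K) {x : E n} (hx : x ∉ K) :
    ∃ u ∈ D, supportFn n K u < ⟪x, u⟫ := by
  classical
  have hbdd := hK.1.2
  have hC0 := hK.1.1.1
  have hKne : K.Nonempty := hC0.int_ne.mono interior_subset
  -- separation
  obtain ⟨f, c, hfK, hcx⟩ := geometric_hahn_banach_closed_point hC0.conv hC0.closed hx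
  set v : E n := (InnerProductSpace.toDual ℝ (E n)).symm f with hv
  have hfv : ∀ w : E n, ⟪v, w⟫ = f w := fun w => InnerProductSpace.toDual_symm_apply
  have hv0 : v ≠ 0 := by
    intro h0
    obtain ⟨y0, hy0⟩ := hKne
    have h1 : f y0 < c := hfK y0 hy0
    have h2 : (f y0 : ℝ) = 0 := by rw [← hfv y0, h0]; simp
    have h3 : (f x : ℝ) = 0 := by rw [← hfv x, h0]; simp
    linarith
  have hnv : (0:ℝ) < ‖v‖ := norm_pos_iff.2 hv0
  set ust : E n := ‖v‖⁻¹ • v with hust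
  have h1 : ‖ust‖ = 1 := norm_smul_inv_norm hv0
  set c' : ℝ := ‖v‖⁻¹ * c with hc'
  have hKlt : ∀ y ∈ K, ⟪y, ust⟫ < c' := by
    intro y hy
    have h2 : ⟪y, v⟫ < c := by rw [real_inner_comm, hfv]; exact hfK y hy
    rw [hust, real_inner_smul_right, hc']
    exact mul_lt_mul_of_pos_left h2 (inv_pos.2 hnv)
  have hxgt : c' < ⟪x, ust⟫ := by
    have h2 : c < ⟪x, v⟫ := by rw [real_inner_comm, hfv]; exact hcx
    rw [hust, real_inner_smul_right, hc']
    exact mul_lt_mul_of_pos_left h2 (inv_pos.2 hnv)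
  have hbddst : BddAbove ((fun y => ⟪y, ust⟫) '' K) :=
    ⟨c', by rintro _ ⟨y, hy, rfl⟩; exact (hKlt y hy).le⟩
  have hustD : ust ∈ closure D := (hbdd ust h1).1 hbddst
  have hsupst : supportFn n K ust ≤ c' :=
    csSup_le (hKne.image _) (by rintro _ ⟨y, hy, rfl⟩; exact (hKlt y hy).le)
  -- the cone over D
  set Cs : Set (E n) := insert (0 : E n) {z : E n | ∃ r : ℝ, 0 < r ∧ ∃ u ∈ D, z = r • u}
    with hCsdef
  have hCsconv : Convex ℝ Cs := hD.2.2
  have h0Cs : (0 : E n) ∈ Cs := mem_insert _ _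
  have hDCs : D ⊆ Cs := fun u hu => Or.inr ⟨1, one_pos, u, hu, (one_smul ℝ u).symm⟩
  have hustCs : ust ∈ closure Cs := closure_mono hDCs hustD
  -- submodule spanned by the cone
  set V : Submodule ℝ (E n) := Submodule.span ℝ Cs with hVdef
  have hCsV : Cs ⊆ (V : Set (E n)) := Submodule.subset_span
  set s₀ : Set V := (Subtype.val : V → E n) ⁻¹' Cs with hs₀def
  have hs₀conv : Convex ℝ s₀ := by
    have := hCsconv.linear_preimage V.subtype
    simpa [Submodule.coe_subtype] using this
  have h0s₀ : (0 : V) ∈ s₀ := by simpa [hs₀def] using h0Cs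
  have himg : (Subtype.val : V → E n) '' s₀ = Cs := by
    rw [hs₀def, Set.image_preimage_eq_inter_range, Subtype.range_coe]
    exact Set.inter_eq_self_of_subset_left hCsV
  have hspan : Submodule.span ℝ s₀ = ⊤ := by
    apply Submodule.map_injective_of_injective V.injective_subtype
    rw [Submodule.map_span, Submodule.map_top, Submodule.range_subtype]
    have himg' : (⇑V.subtype) '' s₀ = Cs := by simpa [Submodule.coe_subtype] using himg
    rw [himg']
  have hvs : vectorSpan ℝ s₀ = ⊤ := by
    rw [eq_top_iff, ← hspan, Submodule.span_le]
    intro z hz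
    have := vsub_mem_vectorSpan ℝ hz h0s₀
    simpa [vsub_eq_sub] using this
  have haff : affineSpan ℝ s₀ = ⊤ :=
    (AffineSubspace.affineSpan_eq_top_iff_vectorSpan_eq_top_of_nonempty ℝ ↥V ↥V
      ⟨0, h0s₀⟩).2 hvs
  have hint : (interior s₀).Nonempty := by
    rw [hs₀conv.interior_nonempty_iff_affineSpan_eq_top]; exact haff
  obtain ⟨z', hz'⟩ := hint
  have hzs₀ : z' ∈ s₀ := interior_subset hz'
  have hzCs : (z' : E n) ∈ Cs := hzs₀
  have hVclosed : IsClosed (V : Set (E n)) := V.closed_of_finiteDimensional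
  have hustV : ust ∈ (V : Set (E n)) := closure_minimal hCsV hVclosed hustCs
  set w' : V := ⟨ust, hustV⟩ with hw'def
  have hw' : w' ∈ closure s₀ := by
    rw [hs₀def]
    rw [Topology.IsEmbedding.subtypeVal.closure_eq_preimage_closure_image
      ((Subtype.val : V → E n) ⁻¹' Cs)]
    rw [show (Subtype.val : V → E n) '' ((Subtype.val : V → E n) ⁻¹' Cs) = Cs from himg]
    exact hustCs
  -- the numbers
  set cz : ℝ := supportFn n K (z' : E n) with hcz
  set bz : ℝ := ⟪x, (z' : E n)⟫ with hbz'
  set cst : ℝ := supportFn n K ust with hcst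
  set bst : ℝ := ⟪x, ust⟫ with hbst
  set d : ℝ := bst - c' with hd
  have hdpos : 0 < d := by rw [hd]; linarith
  set a : ℝ := max (cz - bz) 0 with ha
  have hapos : 0 ≤ a := le_max_right _ _
  have hcza : cz ≤ bz + a := by
    have := le_max_left (cz - bz) 0
    rw [← ha] at this
    linarith
  have hcstd : cst ≤ bst - d := by rw [hd]; linarith
  clear_value cz bz cst bst d a
  have had : 0 < a + d := by linarith
  obtain ⟨θ, hθpos, hθlt, hθad⟩ : ∃ θ : ℝ, 0 < θ ∧ θ < 1 ∧ θ * (a + d) = a + d / 2 := by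
    refine ⟨(a + d / 2) / (a + d), div_pos (by linarith) had,
      (div_lt_one had).2 (by linarith), ?_⟩
    field_simp
  set w : E n := (1 - θ) • (z' : E n) + θ • ust with hwdef
  -- w lies in the cone
  have hwmem : w ∈ Cs := by
    have hseg := hs₀conv.openSegment_interior_closure_subset_interior hz' hw'
    have hmem : (1 - θ) • z' + θ • w' ∈ interior s₀ :=
      hseg ⟨1 - θ, θ, by linarith, hθpos, by ring, rfl⟩
    have h2 : (1 - θ) • z' + θ • w' ∈ s₀ := interior_subset hmem
    have h4 : (((1 - θ) • z' + θ • w' : V) : E n) = w := by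
      simp [hwdef, hw'def]
    rw [hs₀def] at h2
    rw [← h4]; exact h2
  -- w is nonzero
  have hust_e : ⟪ust, eLast n⟫ ≤ 0 := by
    have hcl : IsClosed {y : E n | ⟪y, eLast n⟫ ≤ 0} :=
      isClosed_le (Continuous.inner continuous_id continuous_const) continuous_const
    have hDe : D ⊆ {y : E n | ⟪y, eLast n⟫ ≤ 0} := fun u hu => (hD.2.1 hu).2.le
    exact closure_minimal hDe hcl hustD
  have hustne : ust ≠ 0 := by
    intro h; rw [h, norm_zero] at h1; exact zero_ne_one h1
  have hwne : w ≠ 0 := by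
    by_cases hz0 : (z' : E n) = 0
    · rw [hwdef, hz0, smul_zero, zero_add]
      exact smul_ne_zero hθpos.ne' hustne
    · rcases hzCs with h | h
      · exact absurd h hz0
      · obtain ⟨r, hr, u, hu, hzu⟩ := h
        have hz_e : ⟪(z' : E n), eLast n⟫ < 0 := by
          rw [hzu, real_inner_smul_left]
          exact mul_neg_of_pos_of_neg hr (hD.2.1 hu).2
        intro h0
        have hA : (0:ℝ) < 1 - θ := by linarith
        have hlt : ⟪w, eLast n⟫ < 0 := by
          rw [hwdef, inner_add_left, real_inner_smul_left, real_inner_smul_left]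
          have hx1 : (1 - θ) * ⟪(z' : E n), eLast n⟫ < 0 := mul_neg_of_pos_of_neg hA hz_e
          have hx2 : θ * ⟪ust, eLast n⟫ ≤ 0 :=
            mul_nonpos_of_nonneg_of_nonpos hθpos.le hust_e
          linarith
        rw [h0, inner_zero_left] at hlt
        exact lt_irrefl _ hlt
  obtain ⟨rv, hrv, uv, huv, hwv⟩ : ∃ r : ℝ, 0 < r ∧ ∃ u ∈ D, w = r • u := by
    rcases hwmem with h | h
    · exact absurd h hwne
    · exact h
  -- support function bounds
  have hbz : BddAbove ((fun y => ⟪y, (z' : E n)⟫) '' K) :=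
    bddAbove_inner_of_mem_coneD n D K hK hD.2.1 hzCs
  have hbw : BddAbove ((fun y => ⟪y, w⟫) '' K) :=
    bddAbove_inner_of_mem_coneD n D K hK hD.2.1 hwmem
  have hA : (0:ℝ) < 1 - θ := by linarith
  have hwle : supportFn n K w ≤ (1 - θ) * cz + θ * cst := by
    apply csSup_le (hKne.image _)
    rintro _ ⟨y, hy, rfl⟩
    have hy1 : ⟪y, (z' : E n)⟫ ≤ cz := by
      rw [hcz]; exact le_csSup hbz ⟨y, hy, rfl⟩
    have hy2 : ⟪y, ust⟫ ≤ cst := by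
      rw [hcst]; exact le_csSup hbddst ⟨y, hy, rfl⟩
    show ⟪y, w⟫ ≤ (1 - θ) * cz + θ * cst
    rw [hwdef, inner_add_right, real_inner_smul_right, real_inner_smul_right]
    have hm1 : (1 - θ) * ⟪y, (z' : E n)⟫ ≤ (1 - θ) * cz :=
      mul_le_mul_of_nonneg_left hy1 hA.le
    have hm2 : θ * ⟪y, ust⟫ ≤ θ * cst := mul_le_mul_of_nonneg_left hy2 hθpos.le
    linarith
  have hxw : ⟪x, w⟫ = (1 - θ) * bz + θ * bst := by
    rw [hwdef, inner_add_right, real_inner_smul_right, real_inner_smul_right, hbz', hbst]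
  have hkey : supportFn n K w < ⟪x, w⟫ := by
    have hc : (1 - θ) * a - θ * d < 0 := by linarith [hθad, hdpos]
    have hle2 : (1 - θ) * cz + θ * cst ≤ (1 - θ) * (bz + a) + θ * (bst - d) := by
      have hm1 : (1 - θ) * cz ≤ (1 - θ) * (bz + a) := mul_le_mul_of_nonneg_left hcza hA.le
      have hm2 : θ * cst ≤ θ * (bst - d) := mul_le_mul_of_nonneg_left hcstd hθpos.le
      linarith
    have heq : (1 - θ) * (bz + a) + θ * (bst - d) = ⟪x, w⟫ + ((1 - θ) * a - θ * d) := by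
      rw [hxw]; ring
    linarith
  refine ⟨uv, huv, ?_⟩
  have hxv : ⟪x, w⟫ = rv * ⟪x, uv⟫ := by rw [hwv, real_inner_smul_right]
  have hsub : supportFn n K uv ≤ supportFn n K w / rv := by
    apply csSup_le (hKne.image _)
    rintro _ ⟨y, hy, rfl⟩
    show ⟪y, uv⟫ ≤ supportFn n K w / rv
    rw [le_div_iff₀ hrv]
    have hyw : ⟪y, w⟫ ≤ supportFn n K w := le_csSup hbw ⟨y, hy, rfl⟩
    have hyw2 : ⟪y, w⟫ = rv * ⟪y, uv⟫ := by rw [hwv, real_inner_smul_right]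
    linarith [hyw, hyw2]
  have hfin : supportFn n K w / rv < ⟪x, uv⟫ := by
    rw [div_lt_iff₀ hrv]
    rw [hxv] at hkey
    linarith [hkey]
  linarith

/-- Monotone exhaustion of the covolume. -/
theorem covolume_exhaustion (n : ℕ) (D : Set (E n)) (hD : IsConvexDomain n D)
    (K : Set (E n)) (hK : IsCbD n D K)
    (ω : ℕ → Set (E n)) (hωc : ∀ i, IsCompact (ω i)) (hωD : ∀ i, ω i ⊆ D)
    (hmono : ∀ i, ω i ⊆ ω (i + 1)) (hunion : ⋃ i, ω i = D) :
    (∀ i, wulffOf n K (ω (i + 1)) ⊆ wulffOf n K (ω i)) ∧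
    K = ⋂ i, wulffOf n K (ω i) ∧
    Filter.Tendsto (fun i => volume (Abdry n K \ wulffOf n K (ω i))) Filter.atTop
      (nhds (volume (coco n K))) := by
  have hbdd := hK.1.2
  have hC0 := hK.1.1.1
  have hpart1 : ∀ i, wulffOf n K (ω (i + 1)) ⊆ wulffOf n K (ω i) := by
    intro i y hy
    simp only [wulffOf, Set.mem_inter_iff, Set.mem_iInter] at hy ⊢
    exact ⟨hy.1, fun u hu => hy.2 u (hmono i hu)⟩
  have hKsubA : K ⊆ Abdry n K := by
    intro y hy
    apply subset_closure
    have h0y : 0 ≤ ⟪y, eLast n⟫ := hC0.sub hy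
    refine Set.mem_biUnion (show (⟪y, eLast n⟫ + 1) ∈ Ioi (0:ℝ) from by
      simp only [Set.mem_Ioi]; linarith) ?_
    constructor
    · exact ⟨h0y, by linarith⟩
    · simp only [Set.mem_iInter]
      intro x' hx' u hu
      exact hu.2 y hy
  have hpart2 : K = ⋂ i, wulffOf n K (ω i) := by
    apply Set.Subset.antisymm
    · intro y hy
      rw [Set.mem_iInter]
      intro i
      refine ⟨hKsubA hy, ?_⟩
      simp only [Set.mem_iInter]
      intro u hu
      have huD : u ∈ D := hωD i hu
      have h1 : ‖u‖ = 1 := (hD.2.1 huD).1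
      have hb : BddAbove ((fun y => ⟪y, u⟫) '' K) := (hbdd u h1).2 (subset_closure huD)
      exact le_csSup hb ⟨y, hy, rfl⟩
    · intro y hy
      by_contra hyK
      obtain ⟨u, huD, hlt⟩ := exists_violator n D hD K hK hyK
      have hu2 : u ∈ ⋃ i, ω i := hunion ▸ huD
      obtain ⟨i, hi⟩ := Set.mem_iUnion.1 hu2
      have hyw := (Set.mem_iInter.1 hy) i
      have hle : ⟪y, u⟫ ≤ supportFn n K u := by
        have h2 := hyw.2
        simp only [Set.mem_iInter] at h2
        exact h2 u hi
      linarith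
  refine ⟨hpart1, hpart2, ?_⟩
  have hanti : Antitone (fun i => wulffOf n K (ω i)) := antitone_nat_of_succ_le hpart1
  have hmonoS : Monotone (fun i => Abdry n K \ wulffOf n K (ω i)) :=
    fun i j hij => Set.diff_subset_diff_right (hanti hij)
  have hU : ⋃ i, (Abdry n K \ wulffOf n K (ω i)) = coco n K := by
    rw [← Set.diff_iInter, ← hpart2]
    rfl
  have htend := tendsto_measure_iUnion_atTop (μ := (volume : Measure (E n))) hmonoS
  rw [hU] at htend
  exact htend
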